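/- Define g : [0,1] → [0,1] by g(y) = 2y for 0 ≤ y < 1/2 and g(y) = 2(1 − y) for 1/2 ≤ y ≤ 1, and let g_l denote the l-fold composition of g with itself. Then for every positive integer L, the function f(x) = |x| − Σ_{l=1}^{L−1} 4^{−l} g_l(|x|), restricted to x ∈ [−1,1] and extended to ℝ by the same network formulas, belongs to the neural-net class F_{L,2}(ℝ); explicitly, with hidden variables y_{1,1} = ReLU(x), y_{1,2} = ReLU(−x), y_{2,1} = ReLU(y_{1,1} + y_{1,2}), y_{2,2} = ReLU(y_{1,1} + y_{1,2} − 1/2), y_{l+1,1} = ReLU(2y_{l,1} − 4y_{l,2}), y_{l+1,2} = ReLU(2y_{l,1} − 4y_{l,2} − 1/2) for l = 2,…,L−1, one has |x| = y_{1,1} + y_{1,2} and g_l(|x|) = 2y_{l+1,1} − 4y_{l+1,2} for all x ∈ [−1,1] and l = 1,…,L−1. -/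
import Mathlib


noncomputable section

/-- `f : ℝ^d → ℝ` belongs to the neural-net class `F_{L,M}(ℝ^d)`. -/
def NNClass (d L M : ℕ) (f : (Fin d → ℝ) → ℝ) : Prop :=
  ∃ y : Fin L → Fin M → (Fin d → ℝ) → ℝ,
    (∀ (h0 : 0 < L) (m : Fin M), ∃ (w : Fin d → ℝ) (b : ℝ),
      ∀ x, y ⟨0, h0⟩ m x = max (b + ∑ i, w i * x i) 0) ∧
    (∀ (l : ℕ) (hl : l + 1 < L) (m : Fin M),
      ∃ (w : Fin d → ℝ) (v : Fin M → ℝ) (b : ℝ),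
      ∀ x, y ⟨l + 1, hl⟩ m x =
        max (b + ∑ i, w i * x i + ∑ j, v j * y ⟨l, Nat.lt_of_succ_lt hl⟩ j x) 0) ∧
    (∃ (w : Fin d → ℝ) (c : Fin L → Fin M → ℝ) (b : ℝ),
      ∀ x, f x = b + ∑ i, w i * x i + ∑ l, ∑ m, c l m * y l m x)

/-- The tent map `g(y) = 2y` for `y < 1/2`, `g(y) = 2(1−y)` for `y ≥ 1/2`. -/
def tent (y : ℝ) : ℝ := if y < 1 / 2 then 2 * y else 2 * (1 - y)

/-- The hidden variables of the network computing the square function: `Y l` is the pair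
`(y_{l+1,1}, y_{l+1,2})`, with `y_{1,1} = ReLU(x)`, `y_{1,2} = ReLU(−x)`,
`y_{2,1} = ReLU(y_{1,1} + y_{1,2})`, `y_{2,2} = ReLU(y_{1,1} + y_{1,2} − 1/2)`, and
`y_{l+1,1} = ReLU(2y_{l,1} − 4y_{l,2})`, `y_{l+1,2} = ReLU(2y_{l,1} − 4y_{l,2} − 1/2)`. -/
def Y : ℕ → ℝ → ℝ × ℝ
  | 0, x => (max x 0, max (-x) 0)
  | 1, x => (max ((Y 0 x).1 + (Y 0 x).2) 0, max ((Y 0 x).1 + (Y 0 x).2 - 1 / 2) 0)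
  | l + 2, x => (max (2 * (Y (l + 1) x).1 - 4 * (Y (l + 1) x).2) 0,
                 max (2 * (Y (l + 1) x).1 - 4 * (Y (l + 1) x).2 - 1 / 2) 0)

-- aux lemmas
lemma Y1_def (x : ℝ) : Y 1 x =
    (max ((Y 0 x).1 + (Y 0 x).2) 0, max ((Y 0 x).1 + (Y 0 x).2 - 1 / 2) 0) := rfl

lemma Y_step (l : ℕ) (x : ℝ) : Y (l + 2) x =
    (max (2 * (Y (l + 1) x).1 - 4 * (Y (l + 1) x).2) 0,
     max (2 * (Y (l + 1) x).1 - 4 * (Y (l + 1) x).2 - 1 / 2) 0) := rfl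

lemma tent_formula (t : ℝ) : tent t = 2*t - 4*max (t - 1/2) 0 := by
  unfold tent
  rcases le_or_gt (1/2) t with h | h
  · rw [if_neg (not_lt.2 h), max_eq_left (by linarith)]; ring
  · rw [if_pos h, max_eq_right (by linarith)]; ring

lemma tent_mem {t : ℝ} (h0 : 0 ≤ t) (h1 : t ≤ 1) : 0 ≤ tent t ∧ tent t ≤ 1 := by
  unfold tent; split <;> constructor <;> linarith

lemma iter_mem {t : ℝ} (h0 : 0 ≤ t) (h1 : t ≤ 1) (l : ℕ) :
    0 ≤ tent^[l] t ∧ tent^[l] t ≤ 1 := by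
  induction l with
  | zero => exact ⟨h0, h1⟩
  | succ k ih =>
    rw [Function.iterate_succ_apply']
    exact tent_mem ih.1 ih.2

lemma Y0_sum (x : ℝ) : (Y 0 x).1 + (Y 0 x).2 = |x| := by
  show max x 0 + max (-x) 0 = |x|
  exact max_zero_add_max_neg_zero_eq_abs_self x

lemma Y_small {x : ℝ} (hx : |x| ≤ 1) (l : ℕ) :
    Y (l+1) x = (tent^[l] |x|, max (tent^[l] |x| - 1/2) 0) := by
  induction l with
  | zero =>
    rw [zero_add, Y1_def, Y0_sum, Function.iterate_zero_apply,
      max_eq_left (abs_nonneg x)]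
  | succ k ih =>
    have hmem := iter_mem (abs_nonneg x) hx k
    have ht : 2 * (Y (k+1) x).1 - 4 * (Y (k+1) x).2 = tent (tent^[k] |x|) := by
      rw [ih, tent_formula]
    have hmem' := tent_mem hmem.1 hmem.2
    rw [show k+1+1 = k+2 from rfl, Y_step, ht, max_eq_left hmem'.1,
      ← Function.iterate_succ_apply' tent]

lemma tent_Y {x : ℝ} (hx : |x| ≤ 1) (l : ℕ) :
    tent^[l+1] |x| = 2 * (Y (l+1) x).1 - 4 * (Y (l+1) x).2 := by
  rw [Y_small hx l, Function.iterate_succ_apply', tent_formula]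

lemma Y1_big {x : ℝ} (hx : 1 ≤ |x|) : Y 1 x = (|x|, |x| - 1/2) := by
  rw [Y1_def, Y0_sum, max_eq_left (abs_nonneg x), max_eq_left (by linarith)]

lemma Y_big {x : ℝ} (hx : 1 ≤ |x|) (l : ℕ) : Y (l+2) x = (0, 0) := by
  induction l with
  | zero =>
    rw [Y_step, zero_add, Y1_big hx]
    dsimp only
    rw [max_eq_right (by linarith), max_eq_right (by linarith)]
  | succ k ih =>
    rw [show k+1+2 = (k+1)+2 from rfl, Y_step, show k+1+1 = k+2 from rfl, ih]
    norm_num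

lemma tent_big {u : ℝ} (hu : 1 ≤ u) (l : ℕ) : tent^[l+1] u = 2^l * (2 - 2*u) := by
  induction l with
  | zero =>
    rw [zero_add, Function.iterate_one, pow_zero, tent, if_neg (not_lt.2 (by linarith))]
    ring
  | succ k ih =>
    rw [Function.iterate_succ_apply', ih, tent,
      if_pos (by nlinarith [pow_pos (by norm_num : (0:ℝ) < 2) k])]
    ring

lemma tent_big' {u : ℝ} (hu : 1 ≤ u) (l : ℕ) (hl : 1 ≤ l) :
    tent^[l] u = 2^(l-1) * (2 - 2*u) := by
  obtain ⟨k, rfl⟩ : ∃ k, l = k + 1 := ⟨l - 1, by omega⟩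
  rw [Nat.add_sub_cancel]
  exact tent_big hu k

lemma geom (n : ℕ) : ∑ l ∈ Finset.Icc 1 n, (4:ℝ)^(-(l:ℤ)) * 2^(l-1) = 1/2 - (1/2:ℝ)^(n+1) := by
  induction n with
  | zero => simp
  | succ k ih =>
    rw [Finset.sum_Icc_succ_top (by omega), ih, Nat.add_sub_cancel]
    have h4 : (4:ℝ)^(-((k+1:ℕ):ℤ)) = (1/4:ℝ)^(k+1) := by
      rw [zpow_neg, zpow_natCast, ← inv_pow]; norm_num
    rw [h4]
    have : (1/4:ℝ)^(k+1) * 2^k = (1/2:ℝ)^(k+1+1) := by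
      rw [div_pow, div_pow, one_pow, one_pow,
        show (4:ℝ) = 2^2 by norm_num, ← pow_mul, div_mul_eq_mul_div,
        div_eq_div_iff (by positivity) (by positivity), one_mul, one_mul,
        ← pow_add]
      congr 1
      omega
    rw [this]; ring

def netGamma (L : ℕ) : ℝ := 1/2 - (1/2:ℝ)^(L-1)
def coefA (l m : ℕ) : ℝ := if l = 0 then 1 else (if m = 0 then -2 else 4) * (4:ℝ)^(-(l:ℤ))
def coefB (L l m : ℕ) : ℝ :=
  if l = 1 then (if m = 0 then -netGamma L else 2 * netGamma L)
  else if l = 2 ∧ m = 0 then netGamma L / 2 else 0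
def coefC (L l m : ℕ) : ℝ := coefA l m + coefB L l m
lemma main_identity (L : ℕ) (hL : 0 < L) (t : ℝ) :
    |t| - ∑ l ∈ Finset.Icc 1 (L-1), (4:ℝ)^(-(l:ℤ)) * tent^[l] |t|
    = ∑ l ∈ Finset.range L, (coefC L l 0 * (Y l t).1 + coefC L l 1 * (Y l t).2) := by
  have hrange : Finset.range L = insert 0 (Finset.Icc 1 (L-1)) := by
    ext a; simp only [Finset.mem_range, Finset.mem_insert, Finset.mem_Icc]; omega
  have h0notin : (0:ℕ) ∉ Finset.Icc 1 (L-1) := by simp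
  -- split the sum into A and B parts
  have hsplit : ∑ l ∈ Finset.range L, (coefC L l 0 * (Y l t).1 + coefC L l 1 * (Y l t).2)
      = (∑ l ∈ Finset.range L, (coefA l 0 * (Y l t).1 + coefA l 1 * (Y l t).2))
        + ∑ l ∈ Finset.range L, (coefB L l 0 * (Y l t).1 + coefB L l 1 * (Y l t).2) := by
    rw [← Finset.sum_add_distrib]
    refine Finset.sum_congr rfl fun l _ => ?_
    simp only [coefC]; ring
  have hSA : ∑ l ∈ Finset.range L, (coefA l 0 * (Y l t).1 + coefA l 1 * (Y l t).2)
      = |t| - ∑ l ∈ Finset.Icc 1 (L-1), (4:ℝ)^(-(l:ℤ)) * (2*(Y l t).1 - 4*(Y l t).2) := by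
    rw [hrange, Finset.sum_insert h0notin]
    have h0 : coefA 0 0 * (Y 0 t).1 + coefA 0 1 * (Y 0 t).2 = |t| := by
      simp only [coefA]
      norm_num
      linarith [Y0_sum t]
    have hterm : ∀ l ∈ Finset.Icc 1 (L-1),
        coefA l 0 * (Y l t).1 + coefA l 1 * (Y l t).2
        = -((4:ℝ)^(-(l:ℤ)) * (2*(Y l t).1 - 4*(Y l t).2)) := by
      intro l hl
      have hl1 : l ≠ 0 := by simp only [Finset.mem_Icc] at hl; omega
      simp only [coefA, if_neg hl1]
      norm_num; ring
    rw [Finset.sum_congr rfl hterm, h0, Finset.sum_neg_distrib]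
    ring
  have hSB : (∑ l ∈ Finset.range L, (coefB L l 0 * (Y l t).1 + coefB L l 1 * (Y l t).2))
      = if 3 ≤ L then netGamma L * (-(Y 1 t).1 + 2*(Y 1 t).2 + (Y 2 t).1 / 2) else 0 := by
    match L, hL with
    | 1, _ =>
      rw [if_neg (by omega)]
      simp [coefB, netGamma]
    | 2, _ =>
      rw [if_neg (by omega)]
      have hg : netGamma 2 = 0 := by norm_num [netGamma]
      simp [Finset.sum_range_succ, coefB, hg]
    | (k+3), _ =>
      rw [if_pos (by omega)]
      have hsub : ({1, 2} : Finset ℕ) ⊆ Finset.range (k+3) := by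
        intro a ha
        simp only [Finset.mem_insert, Finset.mem_singleton] at ha
        rcases ha with rfl | rfl <;> simp <;> omega
      rw [← Finset.sum_subset hsub]
      · rw [Finset.sum_pair (by norm_num : (1:ℕ) ≠ 2)]
        simp only [coefB]
        norm_num
        ring
      · intro a _ ha
        simp only [Finset.mem_insert, Finset.mem_singleton] at ha
        push_neg at ha
        simp only [coefB, if_neg ha.1, if_neg (by simp [ha.2] : ¬(a = 2 ∧ 0 = 0))]
        simp [ha.2]
  rw [hsplit, hSA, hSB]
  rcases le_or_gt |t| 1 with hsm | hbig
  · -- |t| ≤ 1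
    have hIcc : ∀ l ∈ Finset.Icc 1 (L-1),
        (4:ℝ)^(-(l:ℤ)) * tent^[l] |t| = (4:ℝ)^(-(l:ℤ)) * (2*(Y l t).1 - 4*(Y l t).2) := by
      intro l hl
      have hl1 : 1 ≤ l := (Finset.mem_Icc.1 hl).1
      obtain ⟨k, rfl⟩ : ∃ k, l = k+1 := ⟨l-1, by omega⟩
      rw [tent_Y hsm k]
    rw [Finset.sum_congr rfl hIcc]
    have hK : -(Y 1 t).1 + 2*(Y 1 t).2 + (Y 2 t).1 / 2 = 0 := by
      have h1 := Y_small hsm 0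
      have h2 := Y_small hsm 1
      rw [show (2:ℕ) = 1+1 from rfl, h2, h1]
      dsimp only
      rw [Function.iterate_one, Function.iterate_zero_apply, tent_formula]
      ring
    rw [hK]
    split <;> ring
  · -- 1 ≤ |t|
    have hbig' : 1 ≤ |t| := le_of_lt hbig
    -- LHS sum
    have hL1 : ∑ l ∈ Finset.Icc 1 (L-1), (4:ℝ)^(-(l:ℤ)) * tent^[l] |t|
        = (1/2 - (1/2:ℝ)^((L-1)+1)) * (2 - 2*|t|) := by
      rw [← geom (L-1), Finset.sum_mul]
      refine Finset.sum_congr rfl fun l hl => ?_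
      have hl1 : 1 ≤ l := (Finset.mem_Icc.1 hl).1
      rw [tent_big' hbig' l hl1]
      ring
    -- SA Icc sum
    have hL2 : ∑ l ∈ Finset.Icc 1 (L-1), (4:ℝ)^(-(l:ℤ)) * (2*(Y l t).1 - 4*(Y l t).2)
        = if 2 ≤ L then (2 - 2*|t|)/4 else 0 := by
      rcases le_or_gt 2 L with h2 | h2
      · rw [if_pos h2]
        rw [Finset.sum_eq_single_of_mem 1 (by simp; omega)]
        · rw [Y1_big hbig']
          norm_num
          ring
        · intro l hl hne
          have hl1 : 1 ≤ l := (Finset.mem_Icc.1 hl).1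
          obtain ⟨k, rfl⟩ : ∃ k, l = k+2 := ⟨l-2, by omega⟩
          rw [Y_big hbig' k]
          norm_num
      · rw [if_neg (by omega)]
        have : L - 1 = 0 := by omega
        rw [this]
        simp
    rw [hL1, hL2]
    have hLL : (L-1)+1 = L := by omega
    rw [hLL]
    rcases Nat.lt_or_ge L 3 with h3 | h3
    · rw [if_neg (show ¬3 ≤ L by omega)]
      interval_cases L
      · norm_num
      · norm_num
        ring
    · rw [if_pos h3, if_pos (by omega), Y1_big hbig', Y_big hbig' 0]
      have hpow : (1/2:ℝ)^(L-1) = 2 * (1/2:ℝ)^L := by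
        obtain ⟨k, rfl⟩ : ∃ k, L = k+1 := ⟨L-1, by omega⟩
        rw [Nat.add_sub_cancel, pow_succ]
        ring
      dsimp only
      rw [netGamma, hpow]
      ring

/-- For every `L ≥ 1`, the function `f(x) = |x| − Σ_{l=1}^{L−1} 4^{−l} g_l(|x|)` belongs
to the neural-net class `F_{L,2}(ℝ)`, and the explicit hidden variables `Y` satisfy
`|x| = y_{1,1} + y_{1,2}` and `g_l(|x|) = 2y_{l+1,1} − 4y_{l+1,2}` for all `x ∈ [−1,1]`
and `l = 1,…,L−1` (here `Y l = (y_{l+1,1}, y_{l+1,2})` and `g_l` is the `l`-fold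
iterate of the tent map). -/
theorem square_network (L : ℕ) (hL : 0 < L) :
    NNClass 1 L 2
        (fun x => |x 0| - ∑ l ∈ Finset.Icc 1 (L - 1), (4 : ℝ) ^ (-(l : ℤ)) * tent^[l] |x 0|) ∧
      ∀ x ∈ Set.Icc (-1 : ℝ) 1,
        |x| = (Y 0 x).1 + (Y 0 x).2 ∧
        ∀ l : ℕ, 1 ≤ l → l ≤ L - 1 → tent^[l] |x| = 2 * (Y l x).1 - 4 * (Y l x).2 := by
  constructor
  · refine ⟨fun l m x => if m.val = 0 then (Y l.val (x 0)).1 else (Y l.val (x 0)).2,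
      ?_, ?_, ?_⟩
    · -- first layer
      intro h0 m
      fin_cases m
      · refine ⟨fun _ => 1, 0, fun x => ?_⟩
        show max (x 0) 0 = max (0 + ∑ i, (1:ℝ) * x i) 0
        simp
      · refine ⟨fun _ => -1, 0, fun x => ?_⟩
        show max (-x 0) 0 = max (0 + ∑ i, (-1:ℝ) * x i) 0
        simp
    · -- hidden layers
      intro l hl m
      match l with
      | 0 =>
        fin_cases m
        · refine ⟨fun _ => 0, ![1, 1], 0, fun x => ?_⟩
          show (Y 1 (x 0)).1 = _
          rw [Y1_def]
          dsimp only
          simp [Fin.sum_univ_two]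
        · refine ⟨fun _ => 0, ![1, 1], -(1/2), fun x => ?_⟩
          show (Y 1 (x 0)).2 = _
          rw [Y1_def]
          dsimp only
          simp only [Fin.sum_univ_two, Fin.sum_univ_one]
          norm_num
          all_goals (first | ring | (congr 1; ring))
      | k + 1 =>
        fin_cases m
        · refine ⟨fun _ => 0, ![2, -4], 0, fun x => ?_⟩
          show (Y (k+2) (x 0)).1 = _
          rw [Y_step]
          dsimp only
          simp only [Fin.sum_univ_two, Fin.sum_univ_one]
          norm_num
          all_goals (first | ring | (congr 1; ring))
        · refine ⟨fun _ => 0, ![2, -4], -(1/2), fun x => ?_⟩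
          show (Y (k+2) (x 0)).2 = _
          rw [Y_step]
          dsimp only
          simp only [Fin.sum_univ_two, Fin.sum_univ_one]
          norm_num
          all_goals (first | ring | (congr 1; ring))
    · -- output layer
      refine ⟨fun _ => 0, fun l m => coefC L l.val m.val, 0, fun x => ?_⟩
      have hy : ∀ l : Fin L, (∑ m : Fin 2,
            coefC L l.val m.val *
              (if m.val = 0 then (Y l.val (x 0)).1 else (Y l.val (x 0)).2))
          = coefC L l.val 0 * (Y l.val (x 0)).1 + coefC L l.val 1 * (Y l.val (x 0)).2 := by
        intro l
        rw [Fin.sum_univ_two]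
        norm_num
      rw [Finset.sum_congr rfl (fun l _ => hy l),
        Fin.sum_univ_eq_sum_range
          (fun n => coefC L n 0 * (Y n (x 0)).1 + coefC L n 1 * (Y n (x 0)).2) L]
      simp only [zero_mul, Finset.sum_const_zero, zero_add]
      exact main_identity L hL (x 0)
  · intro x hx
    have habs : |x| ≤ 1 := abs_le.2 ⟨hx.1, hx.2⟩
    refine ⟨(Y0_sum x).symm, fun l hl1 _ => ?_⟩
    obtain ⟨k, rfl⟩ : ∃ k, l = k + 1 := ⟨l - 1, by omega⟩
    exact tent_Y habs k
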